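/- Let V be a finite-dimensional inner product space, g proper lsc convex, F: dom g → V, and λₖ, λₖ₋₁ > 0, φₖ > 1. Suppose x̄ᵏ = ((φₖ − 1)xᵏ + x̄ᵏ⁻¹)/φₖ, xᵏ⁺¹ = prox_{λₖ g}(x̄ᵏ − λₖ F(xᵏ)), and xᵏ = prox_{λₖ₋₁ g}(x̄ᵏ⁻¹ − λₖ₋₁ F(xᵏ⁻¹)). Then for every x ∈ V: ⟨xᵏ⁺¹ − x̄ᵏ, x − xᵏ⁺¹⟩ + (λₖφₖ/λₖ₋₁)⟨xᵏ − x̄ᵏ, xᵏ⁺¹ − xᵏ⟩ + λₖ⟨F(xᵏ) − F(xᵏ⁻¹), xᵏ − xᵏ⁺¹⟩ ≥ λₖ(⟨F(xᵏ), xᵏ − x⟩ + g(xᵏ) − g(x)). -/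

import Mathlib

/-- Prox characterization: if `u` minimizes `lam*g + ‖·-z‖²/2`, then
`⟨z - u, v - u⟩ ≤ lam*(g v - g u)` for all `v`. -/
lemma prox_char {V : Type*} [NormedAddCommGroup V] [InnerProductSpace ℝ V]
    (g : V → ℝ) (hg : ConvexOn ℝ Set.univ g) (lam : ℝ) (hlam : 0 < lam)
    (u z : V)
    (h : ∀ w : V, lam * g u + ‖u - z‖ ^ 2 / 2 ≤ lam * g w + ‖w - z‖ ^ 2 / 2)
    (v : V) : (inner ℝ (z - u) (v - u) : ℝ) ≤ lam * (g v - g u) := by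
  refine le_of_forall_pos_le_add (fun ε hε => ?_)
  set b : ℝ := ‖v - u‖ ^ 2 / 2 with hbdef
  have hb : 0 ≤ b := by positivity
  set t : ℝ := min 1 (ε / (b + 1)) with htdef
  have ht0 : 0 < t := lt_min one_pos (div_pos hε (by linarith))
  have ht1 : t ≤ 1 := min_le_left _ _
  have htb : t * b ≤ ε := by
    have h2 : t ≤ ε / (b + 1) := min_le_right _ _
    have h3 : t * (b + 1) ≤ ε := by
      rw [← le_div_iff₀ (by linarith : (0:ℝ) < b + 1)]; exact h2
    nlinarith
  have key := h (u + t • (v - u))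
  have hconv : g (u + t • (v - u)) ≤ (1 - t) * g u + t * g v := by
    have hc := hg.2 (Set.mem_univ u) (Set.mem_univ v)
      (by linarith : (0:ℝ) ≤ 1 - t) ht0.le (by ring)
    have heq : (1 - t) • u + t • v = u + t • (v - u) := by module
    rwa [heq] at hc
  have hnorm : ‖u + t • (v - u) - z‖ ^ 2 =
      ‖u - z‖ ^ 2 + 2 * t * (inner ℝ (u - z) (v - u) : ℝ) + t ^ 2 * ‖v - u‖ ^ 2 := by
    have heq : u + t • (v - u) - z = (u - z) + t • (v - u) := by module
    rw [heq, norm_add_sq_real, real_inner_smul_right, norm_smul]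
    simp [mul_pow, abs_of_pos ht0]
    ring
  have h1 : t * (lam * (g u - g v)) ≤
      t * ((inner ℝ (u - z) (v - u) : ℝ) + t * b) := by
    rw [hnorm] at key
    nlinarith [key, hconv]
  have h2 : lam * (g u - g v) ≤ (inner ℝ (u - z) (v - u) : ℝ) + t * b :=
    le_of_mul_le_mul_left (by linarith [h1]) ht0
  have hneg : (inner ℝ (z - u) (v - u) : ℝ) = -(inner ℝ (u - z) (v - u) : ℝ) := by
    rw [← inner_neg_left]; congr 1; abel
  linarith [h2, htb, hneg.le, hneg.ge]

/-- Key inequality (7) in the proof of Theorem 1: combining the prox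
characterizations of `xᵏ⁺¹` and `xᵏ` with `x̄ᵏ = ((φₖ-1)xᵏ + x̄ᵏ⁻¹)/φₖ`. -/
theorem graal_key_inequality
    {V : Type*} [NormedAddCommGroup V] [InnerProductSpace ℝ V]
    [FiniteDimensional ℝ V]
    (g : V → ℝ) (hg : ConvexOn ℝ Set.univ g) (hlsc : LowerSemicontinuous g)
    (F : V → V)
    (lamk lamkm1 phik : ℝ) (hlamk : 0 < lamk) (hlamkm1 : 0 < lamkm1)
    (hphik : 1 < phik)
    (xkm1 xk xk1 xbkm1 xbk : V)
    (hxbk : xbk = phik⁻¹ • ((phik - 1) • xk + xbkm1))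
    (hxk1 : ∀ u : V, lamk * g xk1 + ‖xk1 - (xbk - lamk • F xk)‖ ^ 2 / 2 ≤
      lamk * g u + ‖u - (xbk - lamk • F xk)‖ ^ 2 / 2)
    (hxk : ∀ u : V, lamkm1 * g xk + ‖xk - (xbkm1 - lamkm1 • F xkm1)‖ ^ 2 / 2 ≤
      lamkm1 * g u + ‖u - (xbkm1 - lamkm1 • F xkm1)‖ ^ 2 / 2) :
    ∀ x : V,
      (inner ℝ (xk1 - xbk) (x - xk1) : ℝ) +
        (lamk * phik / lamkm1) * (inner ℝ (xk - xbk) (xk1 - xk) : ℝ) +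
        lamk * (inner ℝ (F xk - F xkm1) (xk - xk1) : ℝ) ≥
      lamk * ((inner ℝ (F xk) (xk - x) : ℝ) + g xk - g x) := by
  intro x
  have hphi0 : (0:ℝ) < phik := by linarith
  -- relation x̄ᵏ⁻¹ - xᵏ = φₖ (x̄ᵏ - xᵏ)
  have hrel : xbkm1 - xk = phik • (xbk - xk) := by
    rw [hxbk]
    rw [smul_sub, smul_smul, mul_inv_cancel₀ hphi0.ne']
    module
  -- first prox inequality at v = x
  have I1 := prox_char g hg lamk hlamk xk1 (xbk - lamk • F xk) hxk1 x
  -- second prox inequality at v = xk1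
  have I2 := prox_char g hg lamkm1 hlamkm1 xk (xbkm1 - lamkm1 • F xkm1) hxk xk1
  have e1 : xbk - lamk • F xk - xk1 = (xbk - xk1) - lamk • F xk := by module
  have e2 : xbkm1 - lamkm1 • F xkm1 - xk = (xbkm1 - xk) - lamkm1 • F xkm1 := by
    module
  rw [e1, inner_sub_left, real_inner_smul_left] at I1
  rw [e2, inner_sub_left, real_inner_smul_left, hrel, real_inner_smul_left] at I2
  -- I1 : ⟨xbk - xk1, x - xk1⟩ - lamk*⟨F xk, x - xk1⟩ ≤ lamk*(g x - g xk1)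
  -- I2 : phik*⟨xbk - xk, xk1 - xk⟩ - lamkm1*⟨F xkm1, xk1 - xk⟩ ≤ lamkm1*(g xk1 - g xk)
  have I2' : (lamk / lamkm1) * (phik * (inner ℝ (xbk - xk) (xk1 - xk) : ℝ)
      - lamkm1 * (inner ℝ (F xkm1) (xk1 - xk) : ℝ))
      ≤ (lamk / lamkm1) * (lamkm1 * (g xk1 - g xk)) :=
    mul_le_mul_of_nonneg_left I2 (by positivity)
  -- rewrite goal inner products in terms of the same atoms
  have g1 : (inner ℝ (xk1 - xbk) (x - xk1) : ℝ) = -(inner ℝ (xbk - xk1) (x - xk1) : ℝ) := by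
    rw [← inner_neg_left]; congr 1; abel
  have g2 : (inner ℝ (xk - xbk) (xk1 - xk) : ℝ) = -(inner ℝ (xbk - xk) (xk1 - xk) : ℝ) := by
    rw [← inner_neg_left]; congr 1; abel
  have g3 : (inner ℝ (F xk - F xkm1) (xk - xk1) : ℝ) =
      (inner ℝ (F xk) (xk - xk1) : ℝ) - (inner ℝ (F xkm1) (xk - xk1) : ℝ) := by
    rw [inner_sub_left]
  have g4 : (inner ℝ (F xk) (xk - x) : ℝ) =
      (inner ℝ (F xk) (xk - xk1) : ℝ) - (inner ℝ (F xk) (x - xk1) : ℝ) := by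
    rw [← inner_sub_right]; congr 1; abel
  have g5 : (inner ℝ (F xkm1) (xk - xk1) : ℝ) = -(inner ℝ (F xkm1) (xk1 - xk) : ℝ) := by
    rw [← inner_neg_right]; congr 1; abel
  have hfrac : lamk / lamkm1 * lamkm1 = lamk := div_mul_cancel₀ _ hlamkm1.ne'
  rw [g1, g2, g3, g4, g5]
  have hexp : (lamk / lamkm1) * (phik * (inner ℝ (xbk - xk) (xk1 - xk) : ℝ)
      - lamkm1 * (inner ℝ (F xkm1) (xk1 - xk) : ℝ))
      = (lamk * phik / lamkm1) * (inner ℝ (xbk - xk) (xk1 - xk) : ℝ)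
      - lamk * (inner ℝ (F xkm1) (xk1 - xk) : ℝ) := by
    field_simp
  rw [hexp] at I2'
  rw [show lamk / lamkm1 * (lamkm1 * (g xk1 - g xk)) = lamk * (g xk1 - g xk) by
    field_simp] at I2'
  nlinarith [I1, I2']
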